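/- (Concrete content of Theorem 3.2(1a).) Let f be a Markov interval map, x ∈ E_f, and let V ⊆ {1,…,n} be such that â_{i,ι(x)} = 0 for every i ∈ V. Then the operators S_{ij} := T_i T_j T_j* (for a_{ij} = 1) and P_i := T_i T_i* on H_x satisfy all the defining relations of the relative graph algebra C*(G_{A_f},V): the P_i are mutually orthogonal projections, S_{ij}* S_{ij} = P_j, S_{ij} S_{ij}* ≤ P_i, and for every v ∈ V one has the exact vertex relation P_v = Σ_{j : a_{vj} = 1} S_{vj} S_{vj}*. -/

import Mathlib

open scoped Classical ENNReal

noncomputable section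

/-- Partition and branch data for a Markov interval map with `n` Markov
subintervals.  `cm j` is the point `c_j⁻` and `cp j` is `c_j⁺` (with
`cm 0 = cp 0 = c₀` and `cm n = cp n = c_n`).  `f` is the globally defined map,
`F j` is the branch of `f` on the `j`-th Markov interval (indexed by
`j = 0, …, n-1`, corresponding to the interval `I_{j+1}` of the paper) and
`F' j` is the derivative of that branch. -/
structure MarkovSystem (n : ℕ) where
  cm : ℕ → ℝ
  cp : ℕ → ℝ
  f : ℝ → ℝ
  F : ℕ → ℝ → ℝ
  F' : ℕ → ℝ → ℝ
  two_le : 2 ≤ n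
  cm_zero : cm 0 = cp 0
  cm_n : cm n = cp n
  cm_le_cp : ∀ j ≤ n, cm j ≤ cp j
  cp_lt_cm : ∀ j < n, cp j < cm (j + 1)

namespace MarkovSystem

variable {n : ℕ} (M : MarkovSystem n)

/-- The Markov interval `I_{j+1} = [c_j⁺, c_{j+1}⁻]` (for `j < n`). -/
def Ipart (j : ℕ) : Set ℝ := Set.Icc (M.cp j) (M.cm (j + 1))

/-- The escape interval `E_j = (c_j⁻, c_j⁺)` (for `1 ≤ j ≤ n-1`). -/
def Epart (j : ℕ) : Set ℝ := Set.Ioo (M.cm j) (M.cp j)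

/-- The ambient interval `I = [c₀, c_n]`. -/
def itv : Set ℝ := Set.Icc (M.cm 0) (M.cm n)

/-- The domain of `f`, namely `⋃_{j=1}^n I_j`. -/
def dom : Set ℝ := ⋃ j ∈ Finset.range n, M.Ipart j

/-- The set `Γ` of partition boundary points. -/
def Gamma : Set ℝ := {y | ∃ j ≤ n, y = M.cm j ∨ y = M.cp j}

/-- `q`-fold image of a set under `f`, applying `f` only where it is defined. -/
def iterImage : ℕ → Set ℝ → Set ℝ
  | 0, S => S
  | q + 1, S => M.f '' (iterImage q S ∩ M.dom)

/-- `f^k(x)` is defined, i.e. all earlier iterates lie in the domain. -/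
def definedUpTo (k : ℕ) (x : ℝ) : Prop := ∀ l < k, M.f^[l] x ∈ M.dom

/-- The orbit equivalence relation `R_f`. -/
def Rrel (x y : ℝ) : Prop :=
  ∃ p q : ℕ, M.definedUpTo p x ∧ M.definedUpTo q y ∧ M.f^[p] x = M.f^[q] y

/-- The generalized orbit `R_f(x)` of a point `x ∈ I`. -/
def Rclass (x : ℝ) : Set ℝ := {y | y ∈ M.itv ∧ M.Rrel x y}

/-- The maximal invariant set `Ω_f`. -/
def Omega : Set ℝ := {x | x ∈ M.itv ∧ ∀ k, M.f^[k] x ∈ M.dom}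

/-- The escape set `E_f = I \ Ω_f`. -/
def Esc : Set ℝ := M.itv \ M.Omega

/-- The regular set `Λ_f = Ω_f \ R_f(Γ)`. -/
def Lambda : Set ℝ := {x | x ∈ M.Omega ∧ ∀ γ ∈ M.Gamma, ¬ M.Rrel x γ}

/-- The escape time of a point of the escape set. -/
def tau (x : ℝ) : ℕ := sInf {k | M.f^[k] x ∉ M.dom}

/-- The final escape point `e(x) = f^{τ(x)}(x)`. -/
def e (x : ℝ) : ℝ := M.f^[M.tau x] x

/-- The transition-matrix condition `a_{ij} = 1`, i.e. `f(int I_i) ⊇ int I_j`. -/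
def trans (i j : ℕ) : Prop := interior (M.Ipart j) ⊆ M.F i '' interior (M.Ipart i)

/-- The escape-transition condition `â_{ik} = 1`, i.e. `int I_i ∩ f⁻¹(E_k) ≠ ∅`. -/
def ahat (i k : ℕ) : Prop := (interior (M.Ipart i) ∩ M.F i ⁻¹' M.Epart k).Nonempty

end MarkovSystem

/-- The defining properties (P1)-(P4) of a Markov interval map, together with the
compatibility of the global map `f` with the branches `F j`:  `f` agrees with `F j`
on `I_j` except possibly at a boundary point shared with an adjacent interval,
where `f` is given by one of the two adjacent branches. -/
structure IsMarkov {n : ℕ} (M : MarkovSystem n) : Prop where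
  compat₁ : ∀ j < n, ∀ x ∈ M.Ipart j, (∀ k < n, k ≠ j → x ∉ M.Ipart k) → M.f x = M.F j x
  compat₂ : ∀ x ∈ M.dom, ∃ j, j < n ∧ x ∈ M.Ipart j ∧ M.f x = M.F j x
  maps_into : ∀ j < n, M.F j '' M.Ipart j ⊆ M.itv
  onto : M.itv ⊆ ⋃ j ∈ Finset.range n, M.F j '' M.Ipart j
  markov : ∀ i < n, ∃ S T : Set ℕ, S ⊆ {j | j < n} ∧ T ⊆ {j | 1 ≤ j ∧ j < n} ∧
    M.F i '' M.Ipart i = (⋃ j ∈ S, M.Ipart j) ∪ (⋃ j ∈ T, M.Epart j)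
  deriv : ∀ i < n, ∀ x ∈ M.Ipart i, HasDerivWithinAt (M.F i) (M.F' i x) (M.Ipart i) x
  derivCont : ∀ i < n, ContinuousOn (M.F' i) (M.Ipart i)
  mono : ∀ i < n, StrictMonoOn (M.F i) (M.Ipart i) ∨ StrictAntiOn (M.F i) (M.Ipart i)
  expansive : ∃ b > 1, ∀ i < n, ∀ x ∈ M.Ipart i, b < |M.F' i x|
  aperiodic : ∀ i < n, ∃ q, M.dom ⊆ M.iterImage q (M.Ipart i)

namespace MarkovSystem

variable {n : ℕ} (M : MarkovSystem n)

/-- The Hilbert space `H_x = ℓ²(R_f(x))`. -/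
abbrev Hsp (x : ℝ) : Type _ := lp (fun _ : M.Rclass x => ℂ) 2

/-- The canonical orthonormal basis vector `δ_z` of `H_x`, for `z ∈ R_f(x)`. -/
def dvec {x : ℝ} (z : M.Rclass x) : M.Hsp x := lp.single 2 z 1

/-- `T` is the bounded operator `T_i` on `H_x`, determined on the basis by
`T_i δ_y = δ_{(f|_{I_i})⁻¹(y)}` if `y ∈ f(I_i)` and `T_i δ_y = 0` otherwise. -/
def IsBranchOp (x : ℝ) (i : ℕ) (T : M.Hsp x →L[ℂ] M.Hsp x) : Prop :=
  (∀ z w : M.Rclass x, (w : ℝ) ∈ M.Ipart i → M.F i w = (z : ℝ) →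
      T (M.dvec z) = M.dvec w) ∧
  (∀ z : M.Rclass x, (z : ℝ) ∉ M.F i '' M.Ipart i → T (M.dvec z) = 0)

/-- `Pe` is the rank-one orthogonal projection onto `ℂ δ_{e(x)}`. -/
def IsEscProj (x : ℝ) (Pe : M.Hsp x →L[ℂ] M.Hsp x) : Prop :=
  ∀ z : M.Rclass x, Pe (M.dvec z) = if (z : ℝ) = M.e x then M.dvec z else 0

end MarkovSystem


-- ### Auxiliary lemmas -------------------------------------------------------

namespace MarkovSystem

variable {n : ℕ} (M : MarkovSystem n)

lemma cm_mono {j k : ℕ} (h : j ≤ k) (hk : k ≤ n) : M.cm j ≤ M.cm k := by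
  induction k with
  | zero =>
    have : j = 0 := by omega
    exact this ▸ le_rfl
  | succ k ih =>
    rcases Nat.eq_or_lt_of_le h with rfl | h'
    · exact le_rfl
    · exact le_trans (ih (by omega) (by omega))
        (le_trans (M.cm_le_cp k (by omega)) (M.cp_lt_cm k (by omega)).le)

lemma cp_mono {j k : ℕ} (h : j ≤ k) (hk : k ≤ n) : M.cp j ≤ M.cp k := by
  rcases Nat.eq_or_lt_of_le h with rfl | h'
  · exact le_rfl
  · exact le_trans (M.cp_lt_cm j (by omega)).le
      (le_trans (M.cm_mono h' hk) (M.cm_le_cp k hk))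

lemma cp_le_cm {j k : ℕ} (h : j < k) (hk : k ≤ n) : M.cp j ≤ M.cm k :=
  le_trans (M.cp_lt_cm j (by omega)).le (M.cm_mono h hk)

lemma cm_mem_Gamma {j : ℕ} (h : j ≤ n) : M.cm j ∈ M.Gamma := ⟨j, h, Or.inl rfl⟩
lemma cp_mem_Gamma {j : ℕ} (h : j ≤ n) : M.cp j ∈ M.Gamma := ⟨j, h, Or.inr rfl⟩

lemma Ipart_subset_itv {j : ℕ} (hj : j < n) : M.Ipart j ⊆ M.itv := by
  intro z hz
  exact ⟨le_trans (le_trans M.cm_zero.le (M.cp_mono (Nat.zero_le j) hj.le)) hz.1,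
    le_trans hz.2 (M.cm_mono (by omega) le_rfl)⟩

lemma gamma_not_interior {j : ℕ} (hj : j < n) {γ : ℝ} (hγ : γ ∈ M.Gamma) :
    γ ∉ Set.Ioo (M.cp j) (M.cm (j + 1)) := by
  obtain ⟨l, hl, hγ'⟩ := hγ
  intro hmem
  rcases le_or_gt l j with hlj | hjl
  · have : γ ≤ M.cp j := by
      rcases hγ' with rfl | rfl
      · exact le_trans (M.cm_le_cp l hl) (M.cp_mono hlj hj.le)
      · exact M.cp_mono hlj hj.le
    exact absurd hmem.1 (not_lt.mpr this)
  · have : M.cm (j + 1) ≤ γ := by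
      rcases hγ' with rfl | rfl
      · exact M.cm_mono hjl hl
      · exact le_trans (M.cm_mono hjl hl) (M.cm_le_cp l hl)
    exact absurd hmem.2 (not_lt.mpr this)

lemma Ipart_inter_gamma {i k : ℕ} (hi : i < n) (hk : k < n) (hik : i ≠ k) {z : ℝ}
    (hzi : z ∈ M.Ipart i) (hzk : z ∈ M.Ipart k) : z ∈ M.Gamma := by
  rcases lt_or_gt_of_ne hik with h | h
  · have h2 : M.cm (i + 1) ≤ M.cp k := by
      rcases Nat.eq_or_lt_of_le (Nat.succ_le_of_lt h) with heq | h'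
      · exact heq ▸ M.cm_le_cp _ (by omega)
      · exact le_trans (M.cm_mono (by omega) hk.le) (M.cm_le_cp k hk.le)
    have : z = M.cm (i + 1) := le_antisymm hzi.2 (le_trans h2 hzk.1)
    exact this ▸ M.cm_mem_Gamma (by omega)
  · have h2 : M.cm (k + 1) ≤ M.cp i := by
      rcases Nat.eq_or_lt_of_le (Nat.succ_le_of_lt h) with heq | h'
      · exact heq ▸ M.cm_le_cp _ (by omega)
      · exact le_trans (M.cm_mono (by omega) hi.le) (M.cm_le_cp i hi.le)
    have : z = M.cm (k + 1) := le_antisymm hzk.2 (le_trans h2 hzi.1)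
    exact this ▸ M.cm_mem_Gamma (by omega)

lemma mem_dom_iff {z : ℝ} : z ∈ M.dom ↔ ∃ j < n, z ∈ M.Ipart j := by
  simp [dom, Finset.mem_range]

lemma Epart_not_dom {l : ℕ} (hl : l ≤ n) {z : ℝ} (hz : z ∈ M.Epart l) : z ∉ M.dom := by
  rw [M.mem_dom_iff]
  rintro ⟨k, hk, hzk⟩
  rcases le_or_gt l k with h | h
  · exact absurd (le_trans (M.cp_mono h hk.le) hzk.1) (not_le.mpr hz.2)
  · exact absurd (le_trans hzk.2 (M.cm_mono h hl)) (not_le.mpr hz.1)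

lemma Epart_eq {l l' : ℕ} (hl : l ≤ n) (hl' : l' ≤ n) {z : ℝ}
    (hz : z ∈ M.Epart l) (hz' : z ∈ M.Epart l') : l = l' := by
  by_contra hne
  rcases lt_or_gt_of_ne hne with h | h
  · exact lt_asymm (lt_of_lt_of_le hz.2 (M.cp_le_cm h hl')) hz'.1
  · exact lt_asymm (lt_of_lt_of_le hz'.2 (M.cp_le_cm h hl)) hz.1

lemma Gamma_subset_dom {γ : ℝ} (hγ : γ ∈ M.Gamma) : γ ∈ M.dom := by
  have hn := M.two_le
  rw [M.mem_dom_iff]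
  obtain ⟨l, hl, h⟩ := hγ
  rcases h with rfl | rfl
  · rcases Nat.eq_zero_or_pos l with rfl | hpos
    · exact ⟨0, by omega, by rw [M.cm_zero]; exact ⟨le_rfl, (M.cp_lt_cm 0 (by omega)).le⟩⟩
    · refine ⟨l - 1, by omega, ?_⟩
      have h1 : l - 1 + 1 = l := by omega
      simp only [Ipart, Set.mem_Icc, h1]
      exact ⟨(h1 ▸ M.cp_lt_cm (l-1) (by omega)).le, le_rfl⟩
  · rcases Nat.lt_or_ge l n with hln | hln
    · exact ⟨l, hln, le_rfl, (M.cp_lt_cm l hln).le⟩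
    · have hcn : M.cp l = M.cm l := by
        rw [le_antisymm hl hln]; exact M.cm_n.symm
      refine ⟨l - 1, by omega, ?_⟩
      have h1 : l - 1 + 1 = l := by omega
      simp only [Ipart, Set.mem_Icc, h1, hcn]
      exact ⟨(h1 ▸ M.cp_lt_cm (l-1) (by omega)).le, le_rfl⟩

lemma boundary_cases {j : ℕ} (hj : j < n) {z : ℝ} (hz : z ∈ M.Ipart j) (hγ : z ∈ M.Gamma) :
    z = M.cp j ∨ z = M.cm (j + 1) := by
  by_contra h
  push_neg at h
  exact M.gamma_not_interior hj hγ
    ⟨lt_of_le_of_ne hz.1 (Ne.symm h.1), lt_of_le_of_ne hz.2 h.2⟩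

end MarkovSystem

section AuxLemmas

open MarkovSystem

variable {n : ℕ} {M : MarkovSystem n} {x : ℝ}

lemma extreme_mem_Gamma (hM : IsMarkov M) {i : ℕ} (hi : i < n) {y : ℝ} (hy : y ∈ M.F i '' M.Ipart i)
    (hext : (∀ t ∈ M.F i '' M.Ipart i, y ≤ t) ∨ (∀ t ∈ M.F i '' M.Ipart i, t ≤ y)) :
    y ∈ M.Gamma := by
  obtain ⟨S, T, hS, hT, hST⟩ := hM.markov i hi
  have hy' : y ∈ (⋃ j ∈ S, M.Ipart j) ∪ (⋃ j ∈ T, M.Epart j) := hST ▸ hy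
  rcases hy' with hyI | hyE
  · obtain ⟨l, hlS, hyl⟩ := Set.mem_iUnion₂.mp hyI
    have hln : l < n := hS hlS
    have hsub : M.Ipart l ⊆ M.F i '' M.Ipart i := by
      rw [hST]; intro t ht; exact Or.inl (Set.mem_iUnion₂.mpr ⟨l, hlS, ht⟩)
    have hcp : M.cp l ∈ M.F i '' M.Ipart i :=
      hsub ⟨le_rfl, (M.cp_lt_cm l hln).le⟩
    have hcm : M.cm (l+1) ∈ M.F i '' M.Ipart i :=
      hsub ⟨(M.cp_lt_cm l hln).le, le_rfl⟩
    rcases hext with hmin | hmax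
    · have : y = M.cp l := le_antisymm (hmin _ hcp) hyl.1
      exact this ▸ M.cp_mem_Gamma hln.le
    · have : y = M.cm (l+1) := le_antisymm hyl.2 (hmax _ hcm)
      exact this ▸ M.cm_mem_Gamma (by omega)
  · exfalso
    obtain ⟨l, hlT, hyl⟩ := Set.mem_iUnion₂.mp hyE
    have hsub : M.Epart l ⊆ M.F i '' M.Ipart i := by
      rw [hST]; intro t ht; exact Or.inr (Set.mem_iUnion₂.mpr ⟨l, hlT, ht⟩)
    rcases hext with hmin | hmax
    · have ht : (M.cm l + y)/2 ∈ M.Epart l :=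
        ⟨by linarith [hyl.1, hyl.2], by linarith [hyl.1, hyl.2]⟩
      exact absurd (hmin _ (hsub ht)) (not_le.mpr (by linarith [hyl.1, hyl.2]))
    · have ht : (y + M.cp l)/2 ∈ M.Epart l :=
        ⟨by linarith [hyl.1, hyl.2], by linarith [hyl.1, hyl.2]⟩
      exact absurd (hmax _ (hsub ht)) (not_le.mpr (by linarith [hyl.1, hyl.2]))

lemma F_boundary_Gamma (hM : IsMarkov M) {i : ℕ} (hi : i < n) {z : ℝ} (hz : z ∈ M.Ipart i)
    (hb : z = M.cp i ∨ z = M.cm (i+1)) : M.F i z ∈ M.Gamma := by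
  refine extreme_mem_Gamma hM hi ⟨z, hz, rfl⟩ ?_
  rcases hM.mono i hi with hmono | hanti
  · rcases hb with rfl | rfl
    · exact Or.inl (by rintro t ⟨s, hs, rfl⟩; exact hmono.monotoneOn hz hs hs.1)
    · exact Or.inr (by rintro t ⟨s, hs, rfl⟩; exact hmono.monotoneOn hs hz hs.2)
  · rcases hb with rfl | rfl
    · exact Or.inr (by rintro t ⟨s, hs, rfl⟩; exact hanti.antitoneOn hz hs hs.1)
    · exact Or.inl (by rintro t ⟨s, hs, rfl⟩; exact hanti.antitoneOn hs hz hs.2)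

lemma f_gamma (hM : IsMarkov M) {γ : ℝ} (hγ : γ ∈ M.Gamma) : M.f γ ∈ M.Gamma := by
  obtain ⟨j, hj, hγj, hfj⟩ := hM.compat₂ γ (M.Gamma_subset_dom hγ)
  rw [hfj]
  exact F_boundary_Gamma hM hj hγj (M.boundary_cases hj hγj hγ)

lemma gamma_iterate (hM : IsMarkov M) {γ : ℝ} (hγ : γ ∈ M.Gamma) (k : ℕ) : M.f^[k] γ ∈ M.Gamma := by
  induction k with
  | zero => exact hγ
  | succ k ih => rw [Function.iterate_succ_apply']; exact f_gamma hM ih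

lemma tau_spec (hx : x ∈ M.Esc) : M.f^[M.tau x] x ∉ M.dom ∧ ∀ l < M.tau x, M.f^[l] x ∈ M.dom := by
  have hne : {k | M.f^[k] x ∉ M.dom}.Nonempty := by
    by_contra h
    rw [Set.not_nonempty_iff_eq_empty] at h
    refine hx.2 ⟨hx.1, fun k => ?_⟩
    by_contra hk
    exact absurd (Set.eq_empty_iff_forall_notMem.mp h k) (not_not_intro hk)
  refine ⟨Nat.sInf_mem hne, fun l hl => ?_⟩
  by_contra hld
  exact absurd (Nat.sInf_le hld) (not_le.mpr hl)

lemma le_tau (hx : x ∈ M.Esc) {p : ℕ} (hp : M.definedUpTo p x) : p ≤ M.tau x := by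
  by_contra h
  exact (tau_spec hx).1 (hp _ (not_le.mp h))

lemma Rclass_escapes (hx : x ∈ M.Esc) {z : ℝ} (hz : z ∈ M.Rclass x) : ∃ k, M.f^[k] z ∉ M.dom := by
  obtain ⟨p, q, hp, hq, heq⟩ := hz.2
  have hpt : p ≤ M.tau x := le_tau hx hp
  refine ⟨(M.tau x - p) + q, ?_⟩
  rw [Function.iterate_add_apply, ← heq, ← Function.iterate_add_apply]
  have h1 : M.tau x - p + p = M.tau x := by omega
  rw [h1]
  exact (tau_spec hx).1

lemma not_gamma (hM : IsMarkov M) (hx : x ∈ M.Esc) {z : ℝ} (hz : z ∈ M.Rclass x) : z ∉ M.Gamma := by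
  intro hγ
  obtain ⟨k, hk⟩ := Rclass_escapes hx hz
  exact hk (M.Gamma_subset_dom (gamma_iterate hM hγ k))

lemma mem_interior_of_Rclass (hM : IsMarkov M) (hx : x ∈ M.Esc) {z : ℝ} (hz : z ∈ M.Rclass x) {i : ℕ} (hi : i < n)
    (hzi : z ∈ M.Ipart i) : z ∈ Set.Ioo (M.cp i) (M.cm (i+1)) := by
  by_cases hγ : z ∈ M.Gamma
  · exact absurd hγ (not_gamma hM hx hz)
  · constructor
    · exact lt_of_le_of_ne hzi.1 (fun h => hγ (h ▸ M.cp_mem_Gamma hi.le))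
    · exact lt_of_le_of_ne hzi.2 (fun h => hγ (h ▸ M.cm_mem_Gamma (by omega)))

lemma unique_part (hM : IsMarkov M) (hx : x ∈ M.Esc) {z : ℝ} (hz : z ∈ M.Rclass x) {i k : ℕ} (hi : i < n) (hk : k < n)
    (hzi : z ∈ M.Ipart i) (hzk : z ∈ M.Ipart k) : i = k := by
  by_contra h
  exact not_gamma hM hx hz (M.Ipart_inter_gamma hi hk h hzi hzk)

lemma fz_eq (hM : IsMarkov M) (hx : x ∈ M.Esc) {z : ℝ} (hz : z ∈ M.Rclass x) {i : ℕ} (hi : i < n)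
    (hzi : z ∈ M.Ipart i) : M.f z = M.F i z :=
  hM.compat₁ i hi z hzi (fun k hk hki hzk =>
    hki (unique_part hM hx hz hk hi hzk hzi))

lemma step_Rclass (hM : IsMarkov M) (hx : x ∈ M.Esc) {z : ℝ} (hz : z ∈ M.Rclass x) {i : ℕ} (hi : i < n)
    (hzi : z ∈ M.Ipart i) : M.F i z ∈ M.Rclass x := by
  have hfz : M.f z = M.F i z := fz_eq hM hx hz hi hzi
  have hzdom : z ∈ M.dom := (M.mem_dom_iff).mpr ⟨i, hi, hzi⟩
  refine ⟨hM.maps_into i hi ⟨z, hzi, rfl⟩, ?_⟩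
  obtain ⟨p, q, hp, hq, heq⟩ := hz.2
  cases q with
  | zero =>
    refine ⟨p + 1, 0, ?_, fun l hl => absurd hl (by omega), ?_⟩
    · intro l hl
      rcases Nat.lt_or_ge l p with h | h
      · exact hp l h
      · have : l = p := by omega
        subst this
        rw [heq]
        exact hzdom
    · rw [Function.iterate_succ_apply', heq]
      exact hfz
  | succ q' =>
    refine ⟨p, q', hp, ?_, ?_⟩
    · intro l hl
      have h2 : M.f^[l] (M.F i z) = M.f^[l+1] z := by
        rw [← hfz, ← Function.iterate_succ_apply]
      rw [h2]
      exact hq (l+1) (by omega)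
    · have h2 : M.f^[q'] (M.F i z) = M.f^[q' + 1] z := by
        rw [← hfz, ← Function.iterate_succ_apply]
      rw [h2]
      exact heq

lemma pre_Rclass (hM : IsMarkov M) (hx : x ∈ M.Esc) {z : ℝ} (hz : z ∈ M.Rclass x) {i : ℕ} (hi : i < n)
    (him : z ∈ M.F i '' M.Ipart i) :
    ∃ w, w ∈ M.Ipart i ∧ M.F i w = z ∧ w ∈ M.Rclass x := by
  obtain ⟨w, hw, hFw⟩ := him
  have hwγ : w ∉ M.Gamma := fun hγ =>
    (not_gamma hM hx hz) (hFw ▸ F_boundary_Gamma hM hi hw (M.boundary_cases hi hw hγ))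
  have hfw : M.f w = M.F i w :=
    hM.compat₁ i hi w hw (fun k hk hki hwk =>
      hwγ (M.Ipart_inter_gamma hi hk (fun h => hki h.symm) hw hwk))
  refine ⟨w, hw, hFw, M.Ipart_subset_itv hi hw, ?_⟩
  obtain ⟨p, q, hp, hq, heq⟩ := hz.2
  refine ⟨p, q + 1, hp, ?_, ?_⟩
  · intro l hl
    cases l with
    | zero => exact (M.mem_dom_iff).mpr ⟨i, hi, hw⟩
    | succ l' =>
      rw [Function.iterate_succ_apply, hfw, hFw]
      exact hq l' (by omega)
  · rw [Function.iterate_succ_apply, hfw, hFw]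
    exact heq

lemma injF (hM : IsMarkov M) {i : ℕ} (hi : i < n) : Set.InjOn (M.F i) (M.Ipart i) :=
  (hM.mono i hi).elim (fun h => h.injOn) (fun h => h.injOn)

lemma esc_val (hx : x ∈ M.Esc) {z : ℝ} (hz : z ∈ M.Rclass x) {l : ℕ} (hl : l ≤ n)
    (hzE : z ∈ M.Epart l) : z = M.e x := by
  have hzdom := M.Epart_not_dom hl hzE
  obtain ⟨p, q, hp, hq, heq⟩ := hz.2
  have hq0 : q = 0 := by
    by_contra h
    exact hzdom (by simpa using hq 0 (by omega))
  subst hq0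
  simp only [Function.iterate_zero_apply] at heq
  have hp1 : p ≤ M.tau x := le_tau hx hp
  have hp2 : M.tau x ≤ p := Nat.sInf_le (by rw [Set.mem_setOf_eq, heq]; exact hzdom)
  have : p = M.tau x := le_antisymm hp1 hp2
  rw [MarkovSystem.e, ← this, heq]

lemma not_extreme (hM : IsMarkov M) {v : ℕ} (hv : v < n) {u y1 y2 : ℝ} (hu : u ∈ M.Ipart v)
    (h1 : y1 ∈ M.F v '' M.Ipart v) (h2 : y2 ∈ M.F v '' M.Ipart v)
    (hlt1 : y1 < M.F v u) (hlt2 : M.F v u < y2) :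
    u ∈ Set.Ioo (M.cp v) (M.cm (v+1)) := by
  obtain ⟨s1, hs1, rfl⟩ := h1
  obtain ⟨s2, hs2, rfl⟩ := h2
  rcases hM.mono v hv with hmono | hanti
  · constructor
    · refine lt_of_le_of_ne hu.1 (fun h => absurd hlt1 (not_lt.mpr ?_))
      exact hmono.monotoneOn hu hs1 (by rw [← h]; exact hs1.1)
    · refine lt_of_le_of_ne hu.2 (fun h => absurd hlt2 (not_lt.mpr ?_))
      exact hmono.monotoneOn hs2 hu (by rw [h]; exact hs2.2)
  · constructor
    · refine lt_of_le_of_ne hu.1 (fun h => absurd hlt2 (not_lt.mpr ?_))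
      exact hanti.antitoneOn hu hs2 (by rw [← h]; exact hs2.1)
    · refine lt_of_le_of_ne hu.2 (fun h => absurd hlt1 (not_lt.mpr ?_))
      exact hanti.antitoneOn hs1 hu (by rw [h]; exact hs1.2)

lemma vertex_part (hM : IsMarkov M) (hx : x ∈ M.Esc) {j0 : ℕ} (hj0 : 1 ≤ j0 ∧ j0 < n) (hex : M.e x ∈ M.Epart j0)
    {z : ℝ} (hz : z ∈ M.Rclass x) {v : ℕ} (hv : v < n) (hzv : z ∈ M.Ipart v)
    (hna : ¬ M.ahat v j0) :
    ∃ l < n, M.F v z ∈ M.Ipart l ∧ M.trans v l := by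
  have hw' : M.F v z ∈ M.Rclass x := step_Rclass hM hx hz hv hzv
  obtain ⟨S, T, hS, hT, hST⟩ := hM.markov v hv
  have hmem : M.F v z ∈ (⋃ j ∈ S, M.Ipart j) ∪ (⋃ j ∈ T, M.Epart j) :=
    hST ▸ ⟨z, hzv, rfl⟩
  rcases hmem with hI | hE
  · obtain ⟨l, hlS, hle⟩ := Set.mem_iUnion₂.mp hI
    have hln : l < n := hS hlS
    have hsub : M.Ipart l ⊆ M.F v '' M.Ipart v := by
      rw [hST]; intro t ht; exact Or.inl (Set.mem_iUnion₂.mpr ⟨l, hlS, ht⟩)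
    refine ⟨l, hln, hle, ?_⟩
    intro y hy
    rw [MarkovSystem.Ipart, interior_Icc] at hy
    obtain ⟨u, hu, hFu⟩ := hsub (Set.Ioo_subset_Icc_self hy)
    have hcp : M.cp l ∈ M.F v '' M.Ipart v := hsub ⟨le_rfl, (M.cp_lt_cm l hln).le⟩
    have hcm : M.cm (l+1) ∈ M.F v '' M.Ipart v := hsub ⟨(M.cp_lt_cm l hln).le, le_rfl⟩
    have huin : u ∈ Set.Ioo (M.cp v) (M.cm (v+1)) :=
      not_extreme hM hv hu hcp hcm (hFu ▸ hy.1) (hFu ▸ hy.2)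
    refine ⟨u, ?_, hFu⟩
    rw [MarkovSystem.Ipart, interior_Icc]
    exact huin
  · exfalso
    obtain ⟨l, hlT, hle⟩ := Set.mem_iUnion₂.mp hE
    have hl := hT hlT
    have hev : M.F v z = M.e x := esc_val hx hw' hl.2.le hle
    have hll : l = j0 := M.Epart_eq hl.2.le hj0.2.le hle (hev ▸ hex)
    refine hna ⟨z, ?_, ?_⟩
    · rw [MarkovSystem.Ipart, interior_Icc]
      exact mem_interior_of_Rclass hM hx hz hv hzv
    · show M.F v z ∈ M.Epart j0
      rw [← hll]
      exact hle

-- ### Operator lemmas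

lemma dvec_coord (z w : M.Rclass x) :
    (M.dvec z) w = if w = z then (1 : ℂ) else 0 := by
  by_cases h : w = z
  · subst h
    rw [MarkovSystem.dvec, lp.single_apply_self, if_pos rfl]
  · rw [MarkovSystem.dvec, lp.single_apply_ne _ _ _ h, if_neg h]

lemma inner_dvec_left (z : M.Rclass x) (v : M.Hsp x) :
    (inner ℂ (M.dvec z) v : ℂ) = v z := by
  rw [MarkovSystem.dvec, lp.inner_single_left, RCLike.inner_apply]
  simp

lemma ext_basis {A B : M.Hsp x →L[ℂ] M.Hsp x}
    (h : ∀ z, A (M.dvec z) = B (M.dvec z)) : A = B := by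
  refine ContinuousLinearMap.ext fun v => ?_
  have hv : HasSum (fun z : M.Rclass x => lp.single 2 z (v z)) v :=
    lp.hasSum_single ENNReal.ofNat_ne_top v
  have h2 : ∀ z : M.Rclass x, A (lp.single 2 z (v z)) = B (lp.single 2 z (v z)) := by
    intro z
    have hs : lp.single 2 z (v z) = (v z) • M.dvec z := by
      rw [MarkovSystem.dvec, ← lp.single_smul]
      norm_num
    rw [hs, map_smul, map_smul, h z]
  have hA := hv.mapL A
  rw [funext h2] at hA
  exact hA.unique (hv.mapL B)

lemma star_branch_apply (hM : IsMarkov M) (hx : x ∈ M.Esc) {i : ℕ} (hi : i < n)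
    {Ti : M.Hsp x →L[ℂ] M.Hsp x} (hTi : M.IsBranchOp x i Ti) (u : M.Rclass x) :
    (star Ti) (M.dvec u) =
      if h : (u : ℝ) ∈ M.Ipart i then
        M.dvec ⟨M.F i u, step_Rclass hM hx u.2 hi h⟩ else 0 := by
  apply lp.ext
  funext z
  have hcoord : ((star Ti) (M.dvec u)) z = (inner ℂ (Ti (M.dvec z)) (M.dvec u) : ℂ) := by
    rw [← inner_dvec_left, ContinuousLinearMap.star_eq_adjoint,
      ContinuousLinearMap.adjoint_inner_right]
  rw [hcoord]
  by_cases him : (z : ℝ) ∈ M.F i '' M.Ipart i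
  · obtain ⟨w, hwI, hFw, hwR⟩ := pre_Rclass hM hx z.2 hi him
    have hT : Ti (M.dvec z) = M.dvec ⟨w, hwR⟩ := hTi.1 z ⟨w, hwR⟩ hwI hFw
    rw [hT, inner_dvec_left, dvec_coord]
    by_cases h : (u : ℝ) ∈ M.Ipart i
    · rw [dif_pos h, dvec_coord]
      by_cases hwu : (⟨w, hwR⟩ : M.Rclass x) = u
      · rw [if_pos hwu, if_pos]
        apply Subtype.ext
        show (z : ℝ) = M.F i u
        rw [← hFw]
        exact congrArg (M.F i) (congrArg Subtype.val hwu)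
      · rw [if_neg hwu, if_neg]
        intro hzu
        apply hwu
        apply Subtype.ext
        show w = (u : ℝ)
        refine injF hM hi hwI h ?_
        rw [hFw]
        exact congrArg Subtype.val hzu
    · rw [dif_neg h]
      rw [if_neg, lp.coeFn_zero, Pi.zero_apply]
      intro hwu
      exact h (congrArg Subtype.val hwu ▸ hwI)
  · rw [hTi.2 z him, inner_zero_left]
    by_cases h : (u : ℝ) ∈ M.Ipart i
    · rw [dif_pos h, dvec_coord, if_neg]
      intro hzu
      exact him ⟨u, h, (congrArg Subtype.val hzu).symm⟩
    · rw [dif_neg h, lp.coeFn_zero, Pi.zero_apply]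

lemma P_apply (hM : IsMarkov M) (hx : x ∈ M.Esc) {i : ℕ} (hi : i < n)
    {Ti : M.Hsp x →L[ℂ] M.Hsp x} (hTi : M.IsBranchOp x i Ti) (z : M.Rclass x) :
    (Ti * star Ti) (M.dvec z) =
      if (z : ℝ) ∈ M.Ipart i then M.dvec z else 0 := by
  rw [ContinuousLinearMap.mul_apply, star_branch_apply hM hx hi hTi]
  by_cases h : (z : ℝ) ∈ M.Ipart i
  · rw [dif_pos h, if_pos h]
    exact hTi.1 ⟨M.F i z, step_Rclass hM hx z.2 hi h⟩ z h rfl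
  · rw [dif_neg h, if_neg h, map_zero]

lemma S_apply (hM : IsMarkov M) (hx : x ∈ M.Esc) {i j : ℕ} (hi : i < n) (hj : j < n)
    {Ti Tj : M.Hsp x →L[ℂ] M.Hsp x} (hTi : M.IsBranchOp x i Ti)
    (hTj : M.IsBranchOp x j Tj) (z : M.Rclass x) :
    (Ti * (Tj * star Tj)) (M.dvec z) =
      if (z : ℝ) ∈ M.Ipart j then Ti (M.dvec z) else 0 := by
  rw [ContinuousLinearMap.mul_apply, P_apply hM hx hj hTj]
  by_cases h : (z : ℝ) ∈ M.Ipart j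
  · rw [if_pos h, if_pos h]
  · rw [if_neg h, if_neg h, map_zero]

lemma star_S_apply (hM : IsMarkov M) (hx : x ∈ M.Esc) {i j : ℕ} (hi : i < n) (hj : j < n)
    {Ti Tj : M.Hsp x →L[ℂ] M.Hsp x} (hTi : M.IsBranchOp x i Ti)
    (hTj : M.IsBranchOp x j Tj) (u : M.Rclass x) :
    (star (Ti * (Tj * star Tj))) (M.dvec u) =
      if h : (u : ℝ) ∈ M.Ipart i then
        (if M.F i u ∈ M.Ipart j then
          M.dvec ⟨M.F i u, step_Rclass hM hx u.2 hi h⟩ else 0) else 0 := by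
  have hstar : star (Ti * (Tj * star Tj)) = (Tj * star Tj) * star Ti := by
    rw [star_mul, star_mul, star_star]
  rw [hstar, ContinuousLinearMap.mul_apply, star_branch_apply hM hx hi hTi]
  by_cases h : (u : ℝ) ∈ M.Ipart i
  · rw [dif_pos h, dif_pos h, P_apply hM hx hj hTj]
  · rw [dif_neg h, dif_neg h, map_zero]

lemma SSstar_apply (hM : IsMarkov M) (hx : x ∈ M.Esc) {i j : ℕ} (hi : i < n) (hj : j < n)
    {Ti Tj : M.Hsp x →L[ℂ] M.Hsp x} (hTi : M.IsBranchOp x i Ti)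
    (hTj : M.IsBranchOp x j Tj) (u : M.Rclass x) :
    ((Ti * (Tj * star Tj)) * star (Ti * (Tj * star Tj))) (M.dvec u) =
      if ((u : ℝ) ∈ M.Ipart i ∧ M.F i u ∈ M.Ipart j) then M.dvec u else 0 := by
  rw [ContinuousLinearMap.mul_apply, star_S_apply hM hx hi hj hTi hTj]
  by_cases h : (u : ℝ) ∈ M.Ipart i
  · rw [dif_pos h]
    by_cases h2 : M.F i u ∈ M.Ipart j
    · rw [if_pos h2, if_pos ⟨h, h2⟩, S_apply hM hx hi hj hTi hTj]
      rw [if_pos h2]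
      exact hTi.1 ⟨M.F i u, step_Rclass hM hx u.2 hi h⟩ u h rfl
    · rw [if_neg h2, map_zero, if_neg (fun hc => h2 hc.2)]
  · rw [dif_neg h, map_zero, if_neg (fun hc => h hc.1)]

lemma SstarS_apply (hM : IsMarkov M) (hx : x ∈ M.Esc) {i j : ℕ} (hi : i < n) (hj : j < n)
    (htr : M.trans i j)
    {Ti Tj : M.Hsp x →L[ℂ] M.Hsp x} (hTi : M.IsBranchOp x i Ti)
    (hTj : M.IsBranchOp x j Tj) (z : M.Rclass x) :
    (star (Ti * (Tj * star Tj)) * (Ti * (Tj * star Tj))) (M.dvec z) =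
      if (z : ℝ) ∈ M.Ipart j then M.dvec z else 0 := by
  rw [ContinuousLinearMap.mul_apply, S_apply hM hx hi hj hTi hTj]
  by_cases h : (z : ℝ) ∈ M.Ipart j
  · rw [if_pos h, if_pos h]
    have him : (z : ℝ) ∈ M.F i '' M.Ipart i := by
      have h1 : (z : ℝ) ∈ interior (M.Ipart j) := by
        rw [MarkovSystem.Ipart, interior_Icc]
        exact mem_interior_of_Rclass hM hx z.2 hj h
      exact Set.image_mono interior_subset (htr h1)
    obtain ⟨w, hwI, hFw, hwR⟩ := pre_Rclass hM hx z.2 hi him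
    have hT : Ti (M.dvec z) = M.dvec ⟨w, hwR⟩ := hTi.1 z ⟨w, hwR⟩ hwI hFw
    rw [hT, star_S_apply hM hx hi hj hTi hTj, dif_pos hwI]
    rw [if_pos (by rw [hFw]; exact h)]
    congr 1
    exact Subtype.ext hFw
  · rw [if_neg h, if_neg h, map_zero]

end AuxLemmas


/-- Concrete content of Theorem 3.2(1a): if `â_{i,ι(x)} = 0` for every `i ∈ V`,
then the operators `S_{ij} = T_i T_j T_j*` and `P_i = T_i T_i*` on `H_x` satisfy
all the defining relations of the relative graph algebra `C*(G_{A_f}, V)`. -/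
theorem relative_graph_algebra_relations {n : ℕ} (M : MarkovSystem n) (hM : IsMarkov M)
    {x : ℝ} (hx : x ∈ M.Esc) {j0 : ℕ} (hj0 : 1 ≤ j0 ∧ j0 < n)
    (hex : M.e x ∈ M.Epart j0)
    (V : Set ℕ) (hV : V ⊆ {i | i < n}) (hVa : ∀ i ∈ V, ¬ M.ahat i j0)
    (T : ℕ → (M.Hsp x →L[ℂ] M.Hsp x)) (hT : ∀ i < n, M.IsBranchOp x i (T i)) :
    (∀ i < n, IsSelfAdjoint (T i * star (T i)) ∧
      (T i * star (T i)) * (T i * star (T i)) = T i * star (T i)) ∧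
    (∀ i < n, ∀ j < n, i ≠ j → (T i * star (T i)) * (T j * star (T j)) = 0) ∧
    (∀ i < n, ∀ j < n, M.trans i j →
      star (T i * (T j * star (T j))) * (T i * (T j * star (T j))) =
        T j * star (T j) ∧
      (T i * star (T i) -
        (T i * (T j * star (T j))) * star (T i * (T j * star (T j)))).IsPositive) ∧
    (∀ v ∈ V, T v * star (T v) =
      ∑ j ∈ Finset.range n, if M.trans v j then
        (T v * (T j * star (T j))) * star (T v * (T j * star (T j))) else 0) := by
  refine ⟨?_, ?_, ?_, ?_⟩
  · -- mutually orthogonal projections: self-adjoint and idempotent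
    intro i hi
    refine ⟨IsSelfAdjoint.mul_star_self (T i), ?_⟩
    apply ext_basis
    intro z
    rw [ContinuousLinearMap.mul_apply, P_apply hM hx hi (hT i hi)]
    by_cases h : (z : ℝ) ∈ M.Ipart i
    · rw [if_pos h, P_apply hM hx hi (hT i hi), if_pos h]
    · rw [if_neg h, map_zero]
  · -- orthogonality
    intro i hi j hj hij
    apply ext_basis
    intro z
    rw [ContinuousLinearMap.mul_apply, P_apply hM hx hj (hT j hj),
      ContinuousLinearMap.zero_apply]
    by_cases h : (z : ℝ) ∈ M.Ipart j
    · rw [if_pos h, P_apply hM hx hi (hT i hi),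
        if_neg (fun h2 => hij (unique_part hM hx z.2 hi hj h2 h))]
    · rw [if_neg h, map_zero]
  · -- Cuntz–Krieger relations for the partial isometries
    intro i hi j hj htr
    constructor
    · apply ext_basis
      intro z
      rw [SstarS_apply hM hx hi hj htr (hT i hi) (hT j hj), P_apply hM hx hj (hT j hj)]
    · set S := T i * (T j * star (T j)) with hS
      set D := T i * star (T i) - S * star S with hDdef
      have hD : ∀ u : M.Rclass x, D (M.dvec u) =
          if ((u : ℝ) ∈ M.Ipart i ∧ M.F i u ∉ M.Ipart j) then M.dvec u else 0 := by
        intro u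
        rw [hDdef, ContinuousLinearMap.sub_apply, P_apply hM hx hi (hT i hi),
          SSstar_apply hM hx hi hj (hT i hi) (hT j hj)]
        by_cases h1 : (u : ℝ) ∈ M.Ipart i
        · by_cases h2 : M.F i u ∈ M.Ipart j
          · rw [if_pos h1, if_pos ⟨h1, h2⟩, if_neg (fun hc => hc.2 h2), sub_self]
          · rw [if_pos h1, if_neg (fun hc => h2 hc.2), if_pos ⟨h1, h2⟩, sub_zero]
        · rw [if_neg h1, if_neg (fun hc => h1 hc.1), if_neg (fun hc => h1 hc.1), sub_zero]
      have hsa : IsSelfAdjoint D :=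
        (IsSelfAdjoint.mul_star_self (T i)).sub (IsSelfAdjoint.mul_star_self S)
      have hid : D * D = D := by
        apply ext_basis
        intro u
        rw [ContinuousLinearMap.mul_apply, hD u]
        by_cases h : ((u : ℝ) ∈ M.Ipart i ∧ M.F i u ∉ M.Ipart j)
        · rw [if_pos h, hD u, if_pos h]
        · rw [if_neg h, map_zero]
      refine ⟨hsa.isSymmetric, fun v => ?_⟩
      rw [ContinuousLinearMap.reApplyInnerSelf_apply]
      have h1 : D (D v) = D v := by rw [← ContinuousLinearMap.mul_apply, hid]
      have h3 : (inner ℂ (D v) v : ℂ) = inner ℂ (D v) (D v) := by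
        conv_lhs => rw [← h1]
        exact hsa.isSymmetric (D v) v
      rw [h3]
      exact inner_self_nonneg
  · -- exact vertex relation on V
    intro v hv
    have hvn : v < n := hV hv
    apply ext_basis
    intro z
    rw [P_apply hM hx hvn (hT v hvn), ContinuousLinearMap.sum_apply]
    by_cases hz : (z : ℝ) ∈ M.Ipart v
    · rw [if_pos hz]
      obtain ⟨l, hln, hFl, htl⟩ := vertex_part hM hx hj0 hex z.2 hvn hz (hVa v hv)
      have h0 : ∀ b ∈ Finset.range n, b ≠ l →
          (if M.trans v b then
            (T v * (T b * star (T b))) * star (T v * (T b * star (T b))) else 0)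
            (M.dvec z) = 0 := by
        intro b hb hbl
        have hbn : b < n := Finset.mem_range.mp hb
        by_cases hc : M.trans v b
        · rw [if_pos hc, SSstar_apply hM hx hvn hbn (hT v hvn) (hT b hbn),
            if_neg (fun hcc => hbl
              (unique_part hM hx (step_Rclass hM hx z.2 hvn hz) hbn hln hcc.2 hFl))]
        · rw [if_neg hc, ContinuousLinearMap.zero_apply]
      rw [Finset.sum_eq_single l h0 (fun hl => absurd (Finset.mem_range.mpr hln) hl),
        if_pos htl, SSstar_apply hM hx hvn hln (hT v hvn) (hT l hln), if_pos ⟨hz, hFl⟩]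
    · rw [if_neg hz]
      refine (Finset.sum_eq_zero fun b hb => ?_).symm
      have hbn : b < n := Finset.mem_range.mp hb
      by_cases hc : M.trans v b
      · rw [if_pos hc, SSstar_apply hM hx hvn hbn (hT v hvn) (hT b hbn),
          if_neg (fun hcc => hz hcc.1)]
      · rw [if_neg hc, ContinuousLinearMap.zero_apply]
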